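/- Let F : Δ_A → [0,1]^K be L-Lipschitz. For every pair of players i, j ∈ {1, …, N}, every strategy profile (π¹, …, π^N) ∈ Δ_A^N, and every π, π̄ ∈ Δ_A, it holds that | V^i(π, π^{−j}) − V^i(π̄, π^{−j}) | ≤ L_{j,i} ‖π − π̄‖₂, where L_{j,i} = √K if j = i and L_{j,i} = 2L√(2K)/N if j ≠ i. -/

import Mathlib

open scoped BigOperators
open MeasureTheory ProbabilityTheory Finset

noncomputable section

/-- The probability simplex over `Fin K`, inside Euclidean space (ℓ2 norm). -/
def simplex (K : ℕ) : Set (EuclideanSpace ℝ (Fin K)) :=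
  {x | (∀ a, 0 ≤ x a) ∧ ∑ a, x a = 1}

/-- Empirical occupancy measure `μ̂ = (1/N) ∑_j e_{a^j}` of an action profile. -/
def empDist (K N : ℕ) (v : Fin N → Fin K) : EuclideanSpace ℝ (Fin K) :=
  (N : ℝ)⁻¹ • ∑ j : Fin N, EuclideanSpace.single (v j) (1 : ℝ)

/-- Expected payoff `V^i(π¹,…,π^N) = E[F(μ̂)(a^i)]`, written as the finite sum over
action profiles weighted by the product of the independent mixed strategies. -/
def Vval (K N : ℕ) (F : EuclideanSpace ℝ (Fin K) → EuclideanSpace ℝ (Fin K))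
    (π : Fin N → EuclideanSpace ℝ (Fin K)) (i : Fin N) : ℝ :=
  ∑ v : Fin N → Fin K, (∏ j : Fin N, π j (v j)) * F (empDist K N v) (v i)

/-- Exploitability `E^i_exp(π¹,…,π^N) = sup_{π′∈Δ} V^i(π′,π^{−i}) − V^i(π¹,…,π^N)`. -/
def expl (K N : ℕ) (F : EuclideanSpace ℝ (Fin K) → EuclideanSpace ℝ (Fin K))
    (π : Fin N → EuclideanSpace ℝ (Fin K)) (i : Fin N) : ℝ :=
  (⨆ p : simplex K, Vval K N F (Function.update π i (p : EuclideanSpace ℝ (Fin K))) i)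
    - Vval K N F π i

namespace Stmt1Aux

variable {K N : ℕ}

lemma single_mem_simplex (a : Fin K) : EuclideanSpace.single a (1 : ℝ) ∈ simplex K := by
  constructor
  · intro b; rw [EuclideanSpace.single_apply]; split <;> norm_num
  · simp [EuclideanSpace.single_apply]

lemma prod_update_apply (π : Fin N → EuclideanSpace ℝ (Fin K)) (j : Fin N)
    (q : EuclideanSpace ℝ (Fin K)) (v : Fin N → Fin K) :
    ∏ k, Function.update π j q k (v k)
      = q (v j) * ∏ k ∈ Finset.univ.erase j, π k (v k) := by
  rw [← Finset.mul_prod_erase Finset.univ _ (Finset.mem_univ j), Function.update_self]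
  congr 1
  refine Finset.prod_congr rfl fun k hk => ?_
  rw [Function.update_of_ne (Finset.ne_of_mem_erase hk)]

lemma sum_prod_eq_one (ρ : Fin N → EuclideanSpace ℝ (Fin K))
    (hρ : ∀ k, ∑ a, ρ k a = 1) :
    ∑ v : Fin N → Fin K, ∏ k, ρ k (v k) = 1 := by
  have h := Finset.prod_univ_sum (fun _ : Fin N => (Finset.univ : Finset (Fin K)))
    (fun k a => ρ k a)
  rw [Fintype.piFinset_univ] at h
  rw [← h]
  simp [hρ]

lemma empDist_mem (hN : 0 < N) (v : Fin N → Fin K) : empDist K N v ∈ simplex K := by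
  have happ : ∀ a, empDist K N v a
      = (N : ℝ)⁻¹ * ∑ j : Fin N, (if v j = a then (1:ℝ) else 0) := by
    intro a
    simp only [empDist, PiLp.smul_apply, smul_eq_mul]
    congr 1
    rw [WithLp.ofLp_sum, Finset.sum_apply]
    exact Finset.sum_congr rfl fun j _ => by
      rw [EuclideanSpace.single_apply]; simp [eq_comm]
  constructor
  · intro a
    rw [happ]
    have : (0:ℝ) ≤ ∑ j : Fin N, (if v j = a then (1:ℝ) else 0) :=
      Finset.sum_nonneg fun j _ => by split <;> norm_num
    positivity
  · have hNne : (N : ℝ) ≠ 0 := Nat.cast_ne_zero.mpr hN.ne'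
    calc ∑ a, empDist K N v a
        = (N:ℝ)⁻¹ * ∑ a, ∑ j : Fin N, (if v j = a then (1:ℝ) else 0) := by
          rw [Finset.mul_sum]; exact Finset.sum_congr rfl fun a _ => happ a
      _ = (N:ℝ)⁻¹ * ∑ j : Fin N, ∑ a, (if v j = a then (1:ℝ) else 0) := by
          rw [Finset.sum_comm]
      _ = 1 := by simp [hNne]

variable (K N) in
/-- `W` value: payoff when player `j` plays the pure action `a`. -/
def W (F : EuclideanSpace ℝ (Fin K) → EuclideanSpace ℝ (Fin K))
    (π : Fin N → EuclideanSpace ℝ (Fin K)) (i j : Fin N) (a : Fin K) : ℝ :=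
  Vval K N F (Function.update π j (EuclideanSpace.single a (1:ℝ))) i

lemma Vval_linear (F : EuclideanSpace ℝ (Fin K) → EuclideanSpace ℝ (Fin K))
    (π : Fin N → EuclideanSpace ℝ (Fin K)) (i j : Fin N)
    (p : EuclideanSpace ℝ (Fin K)) :
    Vval K N F (Function.update π j p) i = ∑ a, p a * W K N F π i j a := by
  simp only [W, Vval, prod_update_apply, EuclideanSpace.single_apply]
  simp only [Finset.mul_sum]
  rw [Finset.sum_comm]
  refine Finset.sum_congr rfl fun v _ => ?_
  have h1 : ∀ a : Fin K,
      p a * (((if v j = a then (1:ℝ) else 0) * ∏ k ∈ Finset.univ.erase j, π k (v k))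
        * F (empDist K N v) (v i))
      = if v j = a then p a * ((∏ k ∈ Finset.univ.erase j, π k (v k))
          * F (empDist K N v) (v i)) else 0 := by
    intro a; split <;> simp [mul_assoc]
  rw [Finset.sum_congr rfl fun a _ => h1 a, Finset.sum_ite_eq]
  simp [mul_assoc]


lemma abs_apply_le_norm (x : EuclideanSpace ℝ (Fin K)) (c : Fin K) : |x c| ≤ ‖x‖ := by
  rw [EuclideanSpace.norm_eq]
  have h1 : |x c| = Real.sqrt (‖x c‖ ^ 2) := by
    rw [Real.sqrt_sq_eq_abs, abs_norm, Real.norm_eq_abs]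
  rw [h1]
  exact Real.sqrt_le_sqrt (Finset.single_le_sum
    (f := fun i => ‖x i‖ ^ 2) (fun i _ => sq_nonneg _) (Finset.mem_univ c))

lemma Vval_nonneg (hN : 0 < N) (F : EuclideanSpace ℝ (Fin K) → EuclideanSpace ℝ (Fin K))
    (hFmap : ∀ μ ∈ simplex K, ∀ a : Fin K, F μ a ∈ Set.Icc (0 : ℝ) 1)
    (ρ : Fin N → EuclideanSpace ℝ (Fin K)) (hρ : ∀ k, ρ k ∈ simplex K) (i : Fin N) :
    0 ≤ Vval K N F ρ i :=
  Finset.sum_nonneg fun v _ => mul_nonneg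
    (Finset.prod_nonneg fun k _ => (hρ k).1 (v k))
    (hFmap _ (empDist_mem hN v) (v i)).1

lemma Vval_le_one (hN : 0 < N) (F : EuclideanSpace ℝ (Fin K) → EuclideanSpace ℝ (Fin K))
    (hFmap : ∀ μ ∈ simplex K, ∀ a : Fin K, F μ a ∈ Set.Icc (0 : ℝ) 1)
    (ρ : Fin N → EuclideanSpace ℝ (Fin K)) (hρ : ∀ k, ρ k ∈ simplex K) (i : Fin N) :
    Vval K N F ρ i ≤ 1 := by
  calc Vval K N F ρ i ≤ ∑ v : Fin N → Fin K, ∏ k, ρ k (v k) := by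
        refine Finset.sum_le_sum fun v _ => ?_
        have h1 : (0:ℝ) ≤ ∏ k, ρ k (v k) := Finset.prod_nonneg fun k _ => (hρ k).1 (v k)
        have h2 := (hFmap _ (empDist_mem hN v) (v i)).2
        calc (∏ k, ρ k (v k)) * F (empDist K N v) (v i) ≤ (∏ k, ρ k (v k)) * 1 := by
              exact mul_le_mul_of_nonneg_left h2 h1
          _ = ∏ k, ρ k (v k) := mul_one _
    _ = 1 := sum_prod_eq_one ρ fun k => (hρ k).2

lemma W_as_filter (F : EuclideanSpace ℝ (Fin K) → EuclideanSpace ℝ (Fin K))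
    (π : Fin N → EuclideanSpace ℝ (Fin K)) (i j : Fin N) (a : Fin K) :
    W K N F π i j a = ∑ v ∈ Finset.univ.filter (fun v : Fin N → Fin K => v j = a),
      (∏ k ∈ Finset.univ.erase j, π k (v k)) * F (empDist K N v) (v i) := by
  simp only [W, Vval, prod_update_apply, EuclideanSpace.single_apply]
  rw [Finset.sum_filter]
  refine Finset.sum_congr rfl fun v _ => ?_
  split <;> simp

lemma filter_mass (π : Fin N → EuclideanSpace ℝ (Fin K)) (hπ : ∀ k, π k ∈ simplex K)
    (j : Fin N) (a : Fin K) :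
    ∑ v ∈ Finset.univ.filter (fun v : Fin N → Fin K => v j = a),
      (∏ k ∈ Finset.univ.erase j, π k (v k)) = 1 := by
  have h := sum_prod_eq_one (Function.update π j (EuclideanSpace.single a (1:ℝ)))
    (fun k => by
      rcases eq_or_ne k j with rfl | hk
      · rw [Function.update_self]; exact (single_mem_simplex a).2
      · rw [Function.update_of_ne hk]; exact (hπ k).2)
  rw [← h]
  simp only [prod_update_apply, EuclideanSpace.single_apply]
  rw [Finset.sum_filter]
  refine Finset.sum_congr rfl fun v _ => ?_
  split <;> simp

lemma W_diff (hN : 0 < N) (L : ℝ) (hL : 0 ≤ L)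
    (F : EuclideanSpace ℝ (Fin K) → EuclideanSpace ℝ (Fin K))
    (hFlip : ∀ μ ∈ simplex K, ∀ μ' ∈ simplex K, ‖F μ - F μ'‖ ≤ L * ‖μ - μ'‖)
    (π : Fin N → EuclideanSpace ℝ (Fin K)) (hπ : ∀ k, π k ∈ simplex K)
    (i j : Fin N) (hij : j ≠ i) (a b : Fin K) :
    |W K N F π i j a - W K N F π i j b| ≤ 2 * L / N := by
  classical
  have hCnn : ∀ v : Fin N → Fin K, 0 ≤ ∏ k ∈ Finset.univ.erase j, π k (v k) :=
    fun v => Finset.prod_nonneg fun k _ => (hπ k).1 (v k)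
  have hCupd : ∀ (v : Fin N → Fin K) (c : Fin K),
      ∏ k ∈ Finset.univ.erase j, π k (Function.update v j c k)
        = ∏ k ∈ Finset.univ.erase j, π k (v k) := by
    intro v c
    refine Finset.prod_congr rfl fun k hk => ?_
    rw [Function.update_of_ne (Finset.ne_of_mem_erase hk)]
  -- rewrite W b as a sum over the `a`-filter
  have hWb : W K N F π i j b = ∑ v ∈ Finset.univ.filter (fun v : Fin N → Fin K => v j = a),
      (∏ k ∈ Finset.univ.erase j, π k (v k))
        * F (empDist K N (Function.update v j b)) (v i) := by
    rw [W_as_filter]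
    refine Finset.sum_nbij' (i := fun v => Function.update v j a)
      (j := fun v => Function.update v j b) ?_ ?_ ?_ ?_ ?_
    · intro v hv; simp
    · intro v hv; simp
    · intro v hv
      simp only [Finset.mem_filter, Finset.mem_univ, true_and] at hv
      simp only [Function.update_idem]
      rw [← hv, Function.update_eq_self]
    · intro v hv
      simp only [Finset.mem_filter, Finset.mem_univ, true_and] at hv
      simp only [Function.update_idem]
      rw [← hv, Function.update_eq_self]
    · intro v hv
      simp only [Finset.mem_filter, Finset.mem_univ, true_and] at hv
      have hvb : Function.update v j b = v := by rw [← hv, Function.update_eq_self]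
      simp only [Function.update_idem, hCupd, hvb]
      rw [Function.update_of_ne (Ne.symm hij)]
  -- pointwise Lipschitz bound
  have hpt : ∀ v : Fin N → Fin K,
      |F (empDist K N v) (v i) - F (empDist K N (Function.update v j b)) (v i)| ≤ 2 * L / N := by
    intro v
    set v' := Function.update v j b with hv'
    have h1 : F (empDist K N v) (v i) - F (empDist K N v') (v i)
        = (F (empDist K N v) - F (empDist K N v')) (v i) := by
      rw [PiLp.sub_apply]
    rw [h1]
    have hNpos : (0:ℝ) < N := Nat.cast_pos.mpr hN
    calc |(F (empDist K N v) - F (empDist K N v')) (v i)|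
        ≤ ‖F (empDist K N v) - F (empDist K N v')‖ := abs_apply_le_norm _ _
      _ ≤ L * ‖empDist K N v - empDist K N v'‖ :=
          hFlip _ (empDist_mem hN v) _ (empDist_mem hN v')
      _ ≤ 2 * L / N := by
          have hdist : empDist K N v - empDist K N v'
              = (N : ℝ)⁻¹ • (EuclideanSpace.single (v j) (1:ℝ)
                  - EuclideanSpace.single b (1:ℝ)) := by
            rw [empDist, empDist, ← smul_sub]
            congr 1
            have hA : ∑ k : Fin N, EuclideanSpace.single (v k) (1:ℝ)
                = EuclideanSpace.single (v j) (1:ℝ)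
                  + ∑ k ∈ Finset.univ.erase j, EuclideanSpace.single (v k) (1:ℝ) :=
              (Finset.add_sum_erase _ _ (Finset.mem_univ j)).symm
            have hB : ∑ k : Fin N, EuclideanSpace.single (v' k) (1:ℝ)
                = EuclideanSpace.single b (1:ℝ)
                  + ∑ k ∈ Finset.univ.erase j, EuclideanSpace.single (v k) (1:ℝ) := by
              rw [← Finset.add_sum_erase _ _ (Finset.mem_univ j)]
              congr 1
              · rw [hv', Function.update_self]
              · refine Finset.sum_congr rfl fun k hk => ?_
                rw [hv', Function.update_of_ne (Finset.ne_of_mem_erase hk)]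
            rw [hA, hB]
            abel
          rw [hdist, norm_smul]
          have h2 : ‖EuclideanSpace.single (v j) (1:ℝ) - EuclideanSpace.single b (1:ℝ)‖ ≤ 2 := by
            calc ‖EuclideanSpace.single (v j) (1:ℝ) - EuclideanSpace.single b (1:ℝ)‖
                ≤ ‖EuclideanSpace.single (v j) (1:ℝ)‖ + ‖EuclideanSpace.single b (1:ℝ)‖ :=
                  norm_sub_le _ _
              _ = 2 := by rw [EuclideanSpace.norm_single, EuclideanSpace.norm_single]; norm_num
          have h3 : ‖(N:ℝ)⁻¹‖ = (N:ℝ)⁻¹ := by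
            rw [Real.norm_eq_abs, abs_of_pos (by positivity)]
          rw [h3]
          calc L * ((N:ℝ)⁻¹ * ‖EuclideanSpace.single (v j) (1:ℝ) - EuclideanSpace.single b (1:ℝ)‖)
              ≤ L * ((N:ℝ)⁻¹ * 2) :=
                mul_le_mul_of_nonneg_left
                  (mul_le_mul_of_nonneg_left h2 (by positivity)) hL
            _ = 2 * L / N := by field_simp
  -- combine
  rw [W_as_filter, hWb, ← Finset.sum_sub_distrib]
  have hmass := filter_mass π hπ j a
  calc |∑ v ∈ Finset.univ.filter (fun v : Fin N → Fin K => v j = a),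
        ((∏ k ∈ Finset.univ.erase j, π k (v k)) * F (empDist K N v) (v i)
          - (∏ k ∈ Finset.univ.erase j, π k (v k))
              * F (empDist K N (Function.update v j b)) (v i))|
      ≤ ∑ v ∈ Finset.univ.filter (fun v : Fin N → Fin K => v j = a),
        |(∏ k ∈ Finset.univ.erase j, π k (v k)) * F (empDist K N v) (v i)
          - (∏ k ∈ Finset.univ.erase j, π k (v k))
              * F (empDist K N (Function.update v j b)) (v i)| :=
        Finset.abs_sum_le_sum_abs _ _
    _ ≤ ∑ v ∈ Finset.univ.filter (fun v : Fin N → Fin K => v j = a),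
        (∏ k ∈ Finset.univ.erase j, π k (v k)) * (2 * L / N) := by
        refine Finset.sum_le_sum fun v _ => ?_
        rw [← mul_sub, abs_mul, abs_of_nonneg (hCnn v)]
        exact mul_le_mul_of_nonneg_left (hpt v) (hCnn v)
    _ = 2 * L / N := by rw [← Finset.sum_mul, hmass, one_mul]

lemma abs_sum_mul_le (f g : Fin K → ℝ) :
    |∑ a, f a * g a| ≤ Real.sqrt (∑ a, f a ^ 2) * Real.sqrt (∑ a, g a ^ 2) := by
  rw [abs_le]
  constructor
  · have h2 := Real.sum_mul_le_sqrt_mul_sqrt Finset.univ (fun a => -(f a)) g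
    simp only [neg_mul, Finset.sum_neg_distrib, neg_sq] at h2
    linarith
  · exact Real.sum_mul_le_sqrt_mul_sqrt _ _ _

end Stmt1Aux

/-- Lipschitz continuity of `V^i`, Lemma 2 of the paper.
For `L`-Lipschitz `F : Δ_A → [0,1]^K`, players `i, j`, a strategy profile `(π¹,…,π^N)` and
`π, π̄ ∈ Δ_A`: `|V^i(π, π^{−j}) − V^i(π̄, π^{−j})| ≤ L_{j,i} ‖π − π̄‖₂` with `L_{j,i} = √K` if
`j = i` and `L_{j,i} = 2L√(2K)/N` otherwise. -/
theorem stmt1 (K N : ℕ) (hK : 0 < K) (hN : 0 < N) (L : ℝ) (hL : 0 ≤ L)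
    (F : EuclideanSpace ℝ (Fin K) → EuclideanSpace ℝ (Fin K))
    (hFmap : ∀ μ ∈ simplex K, ∀ a : Fin K, F μ a ∈ Set.Icc (0 : ℝ) 1)
    (hFlip : ∀ μ ∈ simplex K, ∀ μ' ∈ simplex K, ‖F μ - F μ'‖ ≤ L * ‖μ - μ'‖)
    (π : Fin N → EuclideanSpace ℝ (Fin K)) (hπ : ∀ k, π k ∈ simplex K)
    (i j : Fin N) (p p' : EuclideanSpace ℝ (Fin K))
    (hp : p ∈ simplex K) (hp' : p' ∈ simplex K) :
    |Vval K N F (Function.update π j p) i - Vval K N F (Function.update π j p') i|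
      ≤ (if j = i then Real.sqrt K else 2 * L * Real.sqrt (2 * K) / N) * ‖p - p'‖ := by
  classical
  set Wf : Fin K → ℝ := Stmt1Aux.W K N F π i j with hWf
  have hWmem : ∀ a, Wf a ∈ Set.Icc (0:ℝ) 1 := by
    intro a
    have hρ : ∀ k, Function.update π j (EuclideanSpace.single a (1:ℝ)) k ∈ simplex K := by
      intro k
      rcases eq_or_ne k j with rfl | hk
      · rw [Function.update_self]; exact Stmt1Aux.single_mem_simplex a
      · rw [Function.update_of_ne hk]; exact hπ k
    exact ⟨Stmt1Aux.Vval_nonneg hN F hFmap _ hρ i, Stmt1Aux.Vval_le_one hN F hFmap _ hρ i⟩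
  have hlin : Vval K N F (Function.update π j p) i - Vval K N F (Function.update π j p') i
      = ∑ a, (p a - p' a) * Wf a := by
    rw [Stmt1Aux.Vval_linear, Stmt1Aux.Vval_linear, ← Finset.sum_sub_distrib]
    exact Finset.sum_congr rfl fun a _ => by ring
  have hnorm : Real.sqrt (∑ a, (p a - p' a) ^ 2) = ‖p - p'‖ := by
    rw [EuclideanSpace.norm_eq]
    congr 1
    refine Finset.sum_congr rfl fun a _ => ?_
    rw [PiLp.sub_apply, Real.norm_eq_abs, sq_abs]
  rw [hlin]
  by_cases hji : j = i
  · rw [if_pos hji]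
    have hW2 : ∑ a, Wf a ^ 2 ≤ (K : ℝ) := by
      calc ∑ a, Wf a ^ 2 ≤ ∑ a : Fin K, (1:ℝ) := by
            refine Finset.sum_le_sum fun a _ => ?_
            nlinarith [(hWmem a).1, (hWmem a).2]
        _ = (K : ℝ) := by simp
    calc |∑ a, (p a - p' a) * Wf a|
        ≤ Real.sqrt (∑ a, (p a - p' a) ^ 2) * Real.sqrt (∑ a, Wf a ^ 2) :=
          Stmt1Aux.abs_sum_mul_le _ _
      _ ≤ ‖p - p'‖ * Real.sqrt K := by
          rw [hnorm]
          exact mul_le_mul_of_nonneg_left (Real.sqrt_le_sqrt hW2) (norm_nonneg _)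
      _ = Real.sqrt K * ‖p - p'‖ := mul_comm _ _
  · rw [if_neg hji]
    set a₀ : Fin K := ⟨0, hK⟩
    have hsum0 : ∑ a, (p a - p' a) = 0 := by
      rw [Finset.sum_sub_distrib, hp.2, hp'.2, sub_self]
    have hshift : ∑ a, (p a - p' a) * Wf a = ∑ a, (p a - p' a) * (Wf a - Wf a₀) := by
      simp only [mul_sub]
      rw [Finset.sum_sub_distrib, ← Finset.sum_mul, hsum0, zero_mul, sub_zero]
    rw [hshift]
    have hWd : ∀ a, |Wf a - Wf a₀| ≤ 2 * L / N := fun a =>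
      Stmt1Aux.W_diff hN L hL F hFlip π hπ i j hji a a₀
    have hNpos : (0:ℝ) < N := Nat.cast_pos.mpr hN
    have hW2 : ∑ a, (Wf a - Wf a₀) ^ 2 ≤ (K : ℝ) * (2 * L / N) ^ 2 := by
      calc ∑ a, (Wf a - Wf a₀) ^ 2 ≤ ∑ a : Fin K, (2 * L / N) ^ 2 := by
            refine Finset.sum_le_sum fun a _ => ?_
            have h := abs_le.mp (hWd a)
            exact sq_le_sq' h.1 h.2
        _ = (K : ℝ) * (2 * L / N) ^ 2 := by
            rw [Finset.sum_const, Finset.card_univ, Fintype.card_fin, nsmul_eq_mul]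
    have hsqrt : Real.sqrt ((K : ℝ) * (2 * L / N) ^ 2) = Real.sqrt K * (2 * L / N) := by
      rw [Real.sqrt_mul (Nat.cast_nonneg K), Real.sqrt_sq (by positivity)]
    calc |∑ a, (p a - p' a) * (Wf a - Wf a₀)|
        ≤ Real.sqrt (∑ a, (p a - p' a) ^ 2) * Real.sqrt (∑ a, (Wf a - Wf a₀) ^ 2) :=
          Stmt1Aux.abs_sum_mul_le _ _
      _ ≤ ‖p - p'‖ * (Real.sqrt K * (2 * L / N)) := by
          rw [hnorm, ← hsqrt]
          exact mul_le_mul_of_nonneg_left (Real.sqrt_le_sqrt hW2) (norm_nonneg _)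
      _ ≤ 2 * L * Real.sqrt (2 * K) / N * ‖p - p'‖ := by
          have hs : Real.sqrt K ≤ Real.sqrt (2 * K) := by
            refine Real.sqrt_le_sqrt ?_
            have : (0:ℝ) ≤ (K:ℝ) := Nat.cast_nonneg K
            linarith
          have hmain : Real.sqrt K * (2 * L / N) ≤ 2 * L * Real.sqrt (2 * K) / N := by
            calc Real.sqrt K * (2 * L / N) = (2 * L / N) * Real.sqrt K := mul_comm _ _
              _ ≤ (2 * L / N) * Real.sqrt (2 * K) :=
                  mul_le_mul_of_nonneg_left hs (by positivity)
              _ = 2 * L * Real.sqrt (2 * K) / N := by ring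
          calc ‖p - p'‖ * (Real.sqrt K * (2 * L / N))
              ≤ ‖p - p'‖ * (2 * L * Real.sqrt (2 * K) / N) :=
                mul_le_mul_of_nonneg_left hmain (norm_nonneg _)
            _ = 2 * L * Real.sqrt (2 * K) / N * ‖p - p'‖ := mul_comm _ _
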